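/- For 0 < p < 1, 0 < q < 1, p ≠ q, integers δ₁ ≥ 1, δ₂ ≥ 2 with δ₁ ≤ δ₂ - 1, the three quantities S_A = (1-(1-q)^{δ₁})/(pq), S_B = (q·δ₂ - q - 1 + (1 - q·δ₂ + q·δ₁ + q)·(1-q)^{δ₁})/q², and S_C = (p + (q-p)·(1-q)^{δ₁})/(p·q²) satisfy (S_A + S_B + S_C)·x = 1 where x = pq/((1-p) + p·δ₂ - p·(δ₂-δ₁-1)·(1-q)^{δ₁}). -/

import Mathlib

theorem stmt_13 (p q : ℝ) (δ₁ δ₂ : ℕ)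
    (hp : 0 < p) (hp1 : p < 1) (hq : 0 < q) (hq1 : q < 1) (hpq : p ≠ q)
    (hδ₁ : 1 ≤ δ₁) (hδ₂ : 2 ≤ δ₂) (hle : δ₁ ≤ δ₂ - 1) :
    ((1 - (1 - q) ^ δ₁) / (p * q)
        + (q * δ₂ - q - 1 + (1 - q * δ₂ + q * δ₁ + q) * (1 - q) ^ δ₁) / q ^ 2
        + (p + (q - p) * (1 - q) ^ δ₁) / (p * q ^ 2))
      * (p * q / ((1 - p) + p * δ₂ - p * ((δ₂ : ℝ) - δ₁ - 1) * (1 - q) ^ δ₁)) = 1 := by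
  have ht0 : 0 < (1 - q) ^ δ₁ := pow_pos (by linarith) _
  have ht1 : (1 - q) ^ δ₁ < 1 := pow_lt_one₀ (by linarith) (by linarith) (by omega)
  have hc : (0:ℝ) ≤ (δ₂ : ℝ) - δ₁ - 1 := by
    have : δ₁ + 1 ≤ δ₂ := by omega
    have := Nat.cast_le (α := ℝ) |>.mpr this
    push_cast at this
    linarith
  have hd1 : (δ₁:ℝ) ≥ 0 := Nat.cast_nonneg _
  have hD : 0 < (1 - p) + p * δ₂ - p * ((δ₂ : ℝ) - δ₁ - 1) * (1 - q) ^ δ₁ := by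
    have : p * ((δ₂ : ℝ) - δ₁ - 1) * (1 - q) ^ δ₁ ≤ p * ((δ₂ : ℝ) - δ₁ - 1) := by
      have := mul_le_of_le_one_right (mul_nonneg hp.le hc) ht1.le
      linarith
    nlinarith
  have hp' := hp.ne'
  have hq' := hq.ne'
  field_simp
  rw [div_eq_iff (ne_of_gt (by linarith [hD]))]
  ring
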